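/- Let n ≥ 3 and let a₁: [r₀, ∞) → ℝ be bounded, monotone increasing with limit k ∈ (0,∞), and a₂: [r₀, ∞) → ℝ monotone decreasing with limit k. Let f₁, f₂ be C¹ functions on [r₀, ∞) with f_i'(r) = a_i(r)/r + η_i(r) where η_i(r) = O(r⁻³). If lim_{r→∞} (f₁(r) − f₂(r)) = 2, then ∫_{r₀}^∞ (k − a₁(s))/s ds < ∞ and ∫_{r₀}^∞ (a₂(s) − k)/s ds < ∞, and consequently there exists b ∈ ℝ such that f₁(r) − k·ln r − b → 0 as r → ∞. -/

import Mathlib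

open MeasureTheory Filter

open MeasureTheory Filter Set

private lemma aesm_of_eqOn {f g : ℝ → ℝ} {s : Set ℝ} (hs : MeasurableSet s)
    (hg : Measurable g) (h : ∀ x ∈ s, f x = g x) :
    AEStronglyMeasurable f (volume.restrict s) := by
  refine hg.aestronglyMeasurable.restrict.congr ?_
  filter_upwards [ae_restrict_mem hs] with x hx using (h x hx).symm

private lemma integrableOn_of_bdd {f : ℝ → ℝ} {s : Set ℝ} (hs : MeasurableSet s)
    (hsf : volume s ≠ ⊤) (hf : AEStronglyMeasurable f (volume.restrict s))
    {M : ℝ} (bdd : ∀ x ∈ s, |f x| ≤ M) : IntegrableOn f s := by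
  refine ⟨hf, HasFiniteIntegral.restrict_of_bounded (C := M) hsf.lt_top ?_⟩
  refine (ae_restrict_iff' hs).2 (ae_of_all _ ?_)
  simpa [Real.norm_eq_abs] using bdd


/-- Let n ≥ 3 and let a₁ : [r₀, ∞) → ℝ be bounded, monotone increasing with
limit k ∈ (0,∞), and a₂ : [r₀, ∞) → ℝ monotone decreasing with limit k. Let f₁, f₂ be C¹
functions on [r₀, ∞) with fᵢ'(r) = aᵢ(r)/r + ηᵢ(r) where ηᵢ(r) = O(r⁻³). If
lim_{r→∞} (f₁(r) − f₂(r)) = 2, then ∫_{r₀}^∞ (k − a₁(s))/s ds < ∞ and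
∫_{r₀}^∞ (a₂(s) − k)/s ds < ∞, and consequently there exists b ∈ ℝ such that
f₁(r) − k·ln r − b → 0 as r → ∞. -/
theorem stmt_5 (n : ℕ) (hn : 3 ≤ n) (r₀ k : ℝ) (hr₀ : 1 ≤ r₀) (hk : 0 < k)
    (a₁ a₂ f₁ f₂ η₁ η₂ : ℝ → ℝ)
    (ha₁mono : MonotoneOn a₁ (Set.Ici r₀))
    (ha₂anti : AntitoneOn a₂ (Set.Ici r₀))
    (ha₁bdd : ∃ M, ∀ r ∈ Set.Ici r₀, |a₁ r| ≤ M)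
    (ha₁lim : Tendsto a₁ atTop (nhds k))
    (ha₂lim : Tendsto a₂ atTop (nhds k))
    (hf₁ : ContDiffOn ℝ 1 f₁ (Set.Ici r₀))
    (hf₂ : ContDiffOn ℝ 1 f₂ (Set.Ici r₀))
    (hder₁ : ∀ r ∈ Set.Ici r₀, deriv f₁ r = a₁ r / r + η₁ r)
    (hder₂ : ∀ r ∈ Set.Ici r₀, deriv f₂ r = a₂ r / r + η₂ r)
    (hη : ∃ C, ∀ r ∈ Set.Ici r₀, |η₁ r| ≤ C / r ^ 3 ∧ |η₂ r| ≤ C / r ^ 3)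
    (hdiff : Tendsto (fun r => f₁ r - f₂ r) atTop (nhds 2)) :
    IntegrableOn (fun s => (k - a₁ s) / s) (Set.Ici r₀) ∧
    IntegrableOn (fun s => (a₂ s - k) / s) (Set.Ici r₀) ∧
    ∃ b : ℝ, Tendsto (fun r => f₁ r - k * Real.log r - b) atTop (nhds 0) := by
  obtain ⟨M, hM⟩ := ha₁bdd
  obtain ⟨C, hC⟩ := hη
  have hr₀0 : (0:ℝ) < r₀ := lt_of_lt_of_le one_pos hr₀
  have hxpos : ∀ x ∈ Set.Ici r₀, 0 < x := fun x hx => lt_of_lt_of_le hr₀0 hx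
  have hx1 : ∀ x ∈ Set.Ici r₀, 1 ≤ x := fun x hx => le_trans hr₀ hx
  have hC0 : 0 ≤ C := by
    have h1 := (hC r₀ Set.self_mem_Ici).1
    have h2 : (0:ℝ) ≤ C / r₀ ^ 3 := le_trans (abs_nonneg _) h1
    by_contra hc
    push_neg at hc
    have : C / r₀ ^ 3 < 0 := div_neg_of_neg_of_pos hc (by positivity)
    linarith
  have hM0 : 0 ≤ M := le_trans (abs_nonneg _) (hM r₀ Set.self_mem_Ici)
  have ha₁le : ∀ r ∈ Set.Ici r₀, a₁ r ≤ k := by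
    intro r hr
    refine ge_of_tendsto ha₁lim ?_
    filter_upwards [eventually_ge_atTop (max r r₀)] with s hs
    exact ha₁mono hr (le_trans (le_max_right r r₀) hs) (le_trans (le_max_left r r₀) hs)
  have ha₂ge : ∀ r ∈ Set.Ici r₀, k ≤ a₂ r := by
    intro r hr
    refine le_of_tendsto ha₂lim ?_
    filter_upwards [eventually_ge_atTop (max r r₀)] with s hs
    exact ha₂anti hr (le_trans (le_max_right r r₀) hs) (le_trans (le_max_left r r₀) hs)
  have ha₂abs : ∀ r ∈ Set.Ici r₀, |a₂ r| ≤ |a₂ r₀| + |k| := by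
    intro r hr
    have h1 := ha₂ge r hr
    have h2 : a₂ r ≤ a₂ r₀ := ha₂anti Set.self_mem_Ici hr hr
    rw [abs_le]
    constructor
    · have := neg_abs_le k; linarith [abs_nonneg (a₂ r₀)]
    · linarith [le_abs_self (a₂ r₀), abs_nonneg k]
  have habs_div : ∀ x ∈ Set.Ici r₀, ∀ c : ℝ, |c / x| ≤ |c| := by
    intro x hx c
    rw [abs_div, abs_of_pos (hxpos x hx)]
    exact div_le_self (abs_nonneg _) (hx1 x hx)
  have hη₁bdd : ∀ x ∈ Set.Ici r₀, |η₁ x| ≤ C := fun x hx =>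
    le_trans (hC x hx).1 (div_le_self hC0 (one_le_pow₀ (hx1 x hx)))
  have hη₂bdd : ∀ x ∈ Set.Ici r₀, |η₂ x| ≤ C := fun x hx =>
    le_trans (hC x hx).2 (div_le_self hC0 (one_le_pow₀ (hx1 x hx)))
  -- measurability
  have hmes₁ : Measurable (fun x => a₁ (max x r₀)) := by
    apply Monotone.measurable
    intro x y hxy
    exact ha₁mono (le_max_right x r₀) (le_max_right y r₀) (max_le_max hxy le_rfl)
  have hmes₂ : Measurable (fun x => a₂ (max x r₀)) := by
    apply Antitone.measurable
    intro x y hxy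
    exact ha₂anti (le_max_right x r₀) (le_max_right y r₀) (max_le_max hxy le_rfl)
  have hmesd₁ : Measurable (deriv f₁) := measurable_deriv f₁
  have hmesd₂ : Measurable (deriv f₂) := measurable_deriv f₂
  have hg₁aesm : ∀ s : Set ℝ, MeasurableSet s → s ⊆ Set.Ici r₀ →
      AEStronglyMeasurable (fun x => (k - a₁ x) / x) (volume.restrict s) := by
    intro s hs hss
    refine aesm_of_eqOn (g := fun x => (k - a₁ (max x r₀)) / x) hs ((measurable_const.sub hmes₁).div measurable_id) ?_
    intro x hx
    simp [max_eq_left (Set.mem_Ici.mp (hss hx))]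
  have hg₂aesm : ∀ s : Set ℝ, MeasurableSet s → s ⊆ Set.Ici r₀ →
      AEStronglyMeasurable (fun x => (a₂ x - k) / x) (volume.restrict s) := by
    intro s hs hss
    refine aesm_of_eqOn (g := fun x => (a₂ (max x r₀) - k) / x) hs ((hmes₂.sub measurable_const).div measurable_id) ?_
    intro x hx
    simp [max_eq_left (Set.mem_Ici.mp (hss hx))]
  have hη₁aesm : ∀ s : Set ℝ, MeasurableSet s → s ⊆ Set.Ici r₀ →
      AEStronglyMeasurable η₁ (volume.restrict s) := by
    intro s hs hss
    refine aesm_of_eqOn (g := fun x => deriv f₁ x - a₁ (max x r₀) / x) hs (hmesd₁.sub (hmes₁.div measurable_id)) ?_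
    intro x hx
    have := hder₁ x (hss hx)
    simp only [max_eq_left (Set.mem_Ici.mp (hss hx))]
    rw [this]; ring
  have hη₂aesm : ∀ s : Set ℝ, MeasurableSet s → s ⊆ Set.Ici r₀ →
      AEStronglyMeasurable η₂ (volume.restrict s) := by
    intro s hs hss
    refine aesm_of_eqOn (g := fun x => deriv f₂ x - a₂ (max x r₀) / x) hs (hmesd₂.sub (hmes₂.div measurable_id)) ?_
    intro x hx
    have := hder₂ x (hss hx)
    simp only [max_eq_left (Set.mem_Ici.mp (hss hx))]
    rw [this]; ring
  -- integrability on bounded pieces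
  have hIocIci : ∀ R : ℝ, Ioc r₀ R ⊆ Set.Ici r₀ := fun R =>
    Ioc_subset_Ioi_self.trans Ioi_subset_Ici_self
  have hg₁int : ∀ R : ℝ, IntegrableOn (fun x => (k - a₁ x) / x) (Ioc r₀ R) := by
    intro R
    refine integrableOn_of_bdd measurableSet_Ioc measure_Ioc_lt_top.ne
      (hg₁aesm _ measurableSet_Ioc (hIocIci _)) (M := |k| + M) ?_
    intro x hx
    have hx' : x ∈ Set.Ici r₀ := hIocIci _ hx
    refine le_trans (habs_div x hx' _) ?_
    exact le_trans (abs_sub _ _) (add_le_add le_rfl (hM x hx'))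
  have hg₂int : ∀ R : ℝ, IntegrableOn (fun x => (a₂ x - k) / x) (Ioc r₀ R) := by
    intro R
    refine integrableOn_of_bdd measurableSet_Ioc measure_Ioc_lt_top.ne
      (hg₂aesm _ measurableSet_Ioc (hIocIci _)) (M := (|a₂ r₀| + |k|) + |k|) ?_
    intro x hx
    have hx' : x ∈ Set.Ici r₀ := hIocIci _ hx
    refine le_trans (habs_div x hx' _) ?_
    exact le_trans (abs_sub _ _) (add_le_add (ha₂abs x hx') le_rfl)
  have hη₁int : ∀ R : ℝ, IntegrableOn η₁ (Ioc r₀ R) := by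
    intro R
    exact integrableOn_of_bdd measurableSet_Ioc measure_Ioc_lt_top.ne
      (hη₁aesm _ measurableSet_Ioc (hIocIci _)) (M := C)
      (fun x hx => hη₁bdd x (hIocIci _ hx))
  have hη₂int : ∀ R : ℝ, IntegrableOn η₂ (Ioc r₀ R) := by
    intro R
    exact integrableOn_of_bdd measurableSet_Ioc measure_Ioc_lt_top.ne
      (hη₂aesm _ measurableSet_Ioc (hIocIci _)) (M := C)
      (fun x hx => hη₂bdd x (hIocIci _ hx))
  have hDiocint : ∀ R : ℝ, IntegrableOn (fun x => deriv f₁ x - deriv f₂ x) (Ioc r₀ R) := by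
    intro R
    refine integrableOn_of_bdd measurableSet_Ioc measure_Ioc_lt_top.ne
      ((hmesd₁.sub hmesd₂).aestronglyMeasurable.restrict)
      (M := (M + C) + ((|a₂ r₀| + |k|) + C)) ?_
    intro x hx
    have hx' : x ∈ Set.Ici r₀ := hIocIci _ hx
    show |deriv f₁ x - deriv f₂ x| ≤ _
    rw [hder₁ x hx', hder₂ x hx']
    have e1 : |a₁ x / x| ≤ M := le_trans (habs_div x hx' _) (hM x hx')
    have e2 : |a₂ x / x| ≤ |a₂ r₀| + |k| := le_trans (habs_div x hx' _) (ha₂abs x hx')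
    have e3 := hη₁bdd x hx'
    have e4 := hη₂bdd x hx'
    calc |a₁ x / x + η₁ x - (a₂ x / x + η₂ x)|
        ≤ |a₁ x / x + η₁ x| + |a₂ x / x + η₂ x| := abs_sub _ _
      _ ≤ (|a₁ x / x| + |η₁ x|) + (|a₂ x / x| + |η₂ x|) := add_le_add (abs_add_le _ _) (abs_add_le _ _)
      _ ≤ (M + C) + ((|a₂ r₀| + |k|) + C) := by linarith
  have h3int : IntegrableOn (fun x => 2 * C / x ^ 3) (Ioi r₀) := by
    have h : IntegrableOn (fun x => 2 * C * x ^ (-3:ℝ)) (Ioi r₀) :=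
      (integrableOn_Ioi_rpow_of_lt (show (-3:ℝ) < -1 by norm_num) hr₀0).const_mul (2*C)
    refine h.congr_fun ?_ measurableSet_Ioi
    intro x hx
    have hx0 : (0:ℝ) < x := lt_trans hr₀0 hx
    show 2 * C * x ^ (-3:ℝ) = 2 * C / x ^ 3
    rw [show (-3:ℝ) = -((3:ℕ):ℝ) by norm_num, Real.rpow_neg hx0.le, Real.rpow_natCast,
      div_eq_mul_inv]
  have hη₁intIoi : IntegrableOn η₁ (Ioi r₀) := by
    refine MeasureTheory.Integrable.mono h3int (hη₁aesm _ measurableSet_Ioi Ioi_subset_Ici_self) ?_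
    refine (ae_restrict_iff' measurableSet_Ioi).2 (ae_of_all _ ?_)
    intro x hx
    have hx0 : (0:ℝ) < x := lt_trans hr₀0 hx
    have hx' : x ∈ Set.Ici r₀ := Set.mem_Ici.mpr (le_of_lt hx)
    have h2 : (0:ℝ) ≤ 2 * C / x ^ 3 := div_nonneg (by linarith) (pow_pos hx0 3).le
    show ‖η₁ x‖ ≤ ‖2 * C / x ^ 3‖
    rw [Real.norm_eq_abs, Real.norm_eq_abs, abs_of_nonneg h2]
    calc |η₁ x| ≤ C / x ^ 3 := (hC x hx').1
      _ ≤ 2 * C / x ^ 3 := by gcongr; linarith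
  -- derivatives
  have hdiffble : ∀ x, r₀ < x → HasDerivAt f₁ (deriv f₁ x) x ∧ HasDerivAt f₂ (deriv f₂ x) x := by
    intro x hx
    have hnb : Set.Ici r₀ ∈ nhds x := Ici_mem_nhds hx
    exact ⟨((hf₁.differentiableOn one_ne_zero).differentiableAt hnb).hasDerivAt,
           ((hf₂.differentiableOn one_ne_zero).differentiableAt hnb).hasDerivAt⟩
  have hFTCD : ∀ R, r₀ ≤ R → (∫ x in r₀..R, (deriv f₁ x - deriv f₂ x))
      = (f₁ R - f₂ R) - (f₁ r₀ - f₂ r₀) := by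
    intro R hR
    refine intervalIntegral.integral_eq_sub_of_hasDerivAt_of_le hR
      (((hf₁.continuousOn).sub (hf₂.continuousOn)).mono Icc_subset_Ici_self)
      (fun x hx => ((hdiffble x hx.1).1.sub (hdiffble x hx.1).2))
      ((intervalIntegrable_iff_integrableOn_Ioc_of_le hR).2 (hDiocint R))
  set Cη : ℝ := ∫ x in Ioi r₀, 2 * C / x ^ 3 with hCηdef
  have hsum : ∀ R, r₀ ≤ R → |f₁ R - f₂ R| ≤ 3 →
      (∫ x in r₀..R, ((k - a₁ x) / x + (a₂ x - k) / x)) ≤ |f₁ r₀ - f₂ r₀| + 3 + Cη := by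
    intro R hR hF
    have hiD : IntervalIntegrable (fun x => deriv f₁ x - deriv f₂ x) volume r₀ R :=
      (intervalIntegrable_iff_integrableOn_Ioc_of_le hR).2 (hDiocint R)
    have hiη : IntervalIntegrable (fun x => η₁ x - η₂ x) volume r₀ R :=
      (intervalIntegrable_iff_integrableOn_Ioc_of_le hR).2 ((hη₁int R).sub (hη₂int R))
    have hcongr : (∫ x in r₀..R, ((k - a₁ x) / x + (a₂ x - k) / x))
        = ∫ x in r₀..R, ((η₁ x - η₂ x) - (deriv f₁ x - deriv f₂ x)) := by
      refine intervalIntegral.integral_congr ?_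
      intro x hx
      rw [uIcc_of_le hR] at hx
      have hx' : x ∈ Set.Ici r₀ := hx.1
      have hx0 : x ≠ 0 := ne_of_gt (hxpos x hx')
      show (k - a₁ x) / x + (a₂ x - k) / x = (η₁ x - η₂ x) - (deriv f₁ x - deriv f₂ x)
      rw [hder₁ x hx', hder₂ x hx']
      field_simp
      ring
    have hsplit : (∫ x in r₀..R, ((η₁ x - η₂ x) - (deriv f₁ x - deriv f₂ x)))
        = (∫ x in r₀..R, (η₁ x - η₂ x)) - ∫ x in r₀..R, (deriv f₁ x - deriv f₂ x) :=
      intervalIntegral.integral_sub hiη hiD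
    have hηbound : (∫ x in r₀..R, (η₁ x - η₂ x)) ≤ Cη := by
      have h1 : (∫ x in r₀..R, (η₁ x - η₂ x)) ≤ ∫ x in r₀..R, |η₁ x - η₂ x| :=
        le_trans (le_abs_self _) (intervalIntegral.abs_integral_le_integral_abs hR)
      have hi3 : IntervalIntegrable (fun x => 2 * C / x ^ 3) volume r₀ R :=
        (intervalIntegrable_iff_integrableOn_Ioc_of_le hR).2 (h3int.mono_set Ioc_subset_Ioi_self)
      have h2 : (∫ x in r₀..R, |η₁ x - η₂ x|) ≤ ∫ x in r₀..R, 2 * C / x ^ 3 := by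
        refine intervalIntegral.integral_mono_on hR hiη.abs hi3 ?_
        intro x hx
        have hx' : x ∈ Set.Ici r₀ := hx.1
        calc |η₁ x - η₂ x| ≤ C / x ^ 3 + C / x ^ 3 :=
              le_trans (abs_sub _ _) (add_le_add (hC x hx').1 (hC x hx').2)
          _ = 2 * C / x ^ 3 := by ring
      have h3 : (∫ x in r₀..R, 2 * C / x ^ 3) ≤ Cη := by
        rw [intervalIntegral.integral_of_le hR, hCηdef]
        refine setIntegral_mono_set h3int ?_ (HasSubset.Subset.eventuallyLE Ioc_subset_Ioi_self)
        refine (ae_restrict_iff' measurableSet_Ioi).2 (ae_of_all _ ?_)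
        intro x hx
        have hx0 : (0:ℝ) < x := lt_trans hr₀0 hx
        exact div_nonneg (by linarith) (pow_pos hx0 3).le
      linarith
    rw [hcongr, hsplit, hFTCD R hR]
    have h4 := abs_le.1 hF
    have h5 := le_abs_self (f₁ r₀ - f₂ r₀)
    have h6 := neg_abs_le (f₁ r₀ - f₂ r₀)
    linarith
  have hFsmall : ∀ᶠ R in atTop, |f₁ R - f₂ R| ≤ 3 := by
    have h1 : ∀ᶠ x in atTop, f₁ x - f₂ x ≤ 3 :=
      hdiff.eventually (eventually_le_nhds (by norm_num))
    have h2 : ∀ᶠ x in atTop, (-3:ℝ) ≤ f₁ x - f₂ x :=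
      hdiff.eventually (eventually_ge_nhds (by norm_num))
    filter_upwards [h1, h2] with x hx1 hx2
    rw [abs_le]; exact ⟨hx2, hx1⟩
  have hnonneg₁ : ∀ x ∈ Set.Ici r₀, 0 ≤ (k - a₁ x) / x := fun x hx =>
    div_nonneg (by linarith [ha₁le x hx]) (hxpos x hx).le
  have hnonneg₂ : ∀ x ∈ Set.Ici r₀, 0 ≤ (a₂ x - k) / x := fun x hx =>
    div_nonneg (by linarith [ha₂ge x hx]) (hxpos x hx).le
  have part1 : IntegrableOn (fun s => (k - a₁ s) / s) (Set.Ici r₀) := by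
    rw [integrableOn_Ici_iff_integrableOn_Ioi]
    refine integrableOn_Ioi_of_intervalIntegral_norm_bounded
      (|f₁ r₀ - f₂ r₀| + 3 + Cη) r₀ hg₁int tendsto_id ?_
    filter_upwards [eventually_ge_atTop r₀, hFsmall] with R hR hF
    have hnorm : (∫ x in r₀..R, ‖(k - a₁ x) / x‖) = ∫ x in r₀..R, (k - a₁ x) / x := by
      refine intervalIntegral.integral_congr ?_
      intro x hx
      rw [uIcc_of_le hR] at hx
      show ‖(k - a₁ x) / x‖ = (k - a₁ x) / x
      rw [Real.norm_eq_abs, abs_of_nonneg (hnonneg₁ x hx.1)]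
    rw [hnorm]
    have hmono : (∫ x in r₀..R, (k - a₁ x) / x)
        ≤ ∫ x in r₀..R, ((k - a₁ x) / x + (a₂ x - k) / x) := by
      refine intervalIntegral.integral_mono_on hR
        ((intervalIntegrable_iff_integrableOn_Ioc_of_le hR).2 (hg₁int R))
        ((intervalIntegrable_iff_integrableOn_Ioc_of_le hR).2 ((hg₁int R).add (hg₂int R))) ?_
      intro x hx
      linarith [hnonneg₂ x hx.1]
    exact le_trans hmono (hsum R hR hF)
  have part2 : IntegrableOn (fun s => (a₂ s - k) / s) (Set.Ici r₀) := by
    rw [integrableOn_Ici_iff_integrableOn_Ioi]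
    refine integrableOn_Ioi_of_intervalIntegral_norm_bounded
      (|f₁ r₀ - f₂ r₀| + 3 + Cη) r₀ hg₂int tendsto_id ?_
    filter_upwards [eventually_ge_atTop r₀, hFsmall] with R hR hF
    have hnorm : (∫ x in r₀..R, ‖(a₂ x - k) / x‖) = ∫ x in r₀..R, (a₂ x - k) / x := by
      refine intervalIntegral.integral_congr ?_
      intro x hx
      rw [uIcc_of_le hR] at hx
      show ‖(a₂ x - k) / x‖ = (a₂ x - k) / x
      rw [Real.norm_eq_abs, abs_of_nonneg (hnonneg₂ x hx.1)]
    rw [hnorm]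
    have hmono : (∫ x in r₀..R, (a₂ x - k) / x)
        ≤ ∫ x in r₀..R, ((k - a₁ x) / x + (a₂ x - k) / x) := by
      refine intervalIntegral.integral_mono_on hR
        ((intervalIntegrable_iff_integrableOn_Ioc_of_le hR).2 (hg₂int R))
        ((intervalIntegrable_iff_integrableOn_Ioc_of_le hR).2 ((hg₁int R).add (hg₂int R))) ?_
      intro x hx
      linarith [hnonneg₁ x hx.1]
    exact le_trans hmono (hsum R hR hF)
  refine ⟨part1, part2, ?_⟩
  -- part 3
  have hGint : IntegrableOn (fun x => deriv f₁ x - k / x) (Ioi r₀) := by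
    have h1 : IntegrableOn (fun x => η₁ x - (k - a₁ x) / x) (Ioi r₀) :=
      hη₁intIoi.sub (part1.mono_set Ioi_subset_Ici_self)
    refine h1.congr_fun ?_ measurableSet_Ioi
    intro x hx
    have hx' : x ∈ Set.Ici r₀ := Set.mem_Ici.mpr (le_of_lt hx)
    have hx0 : x ≠ 0 := ne_of_gt (hxpos x hx')
    show η₁ x - (k - a₁ x) / x = deriv f₁ x - k / x
    rw [hder₁ x hx']
    field_simp
    ring
  have hFTC3 : ∀ R, r₀ ≤ R → (∫ x in r₀..R, (deriv f₁ x - k / x))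
      = (f₁ R - k * Real.log R) - (f₁ r₀ - k * Real.log r₀) := by
    intro R hR
    refine intervalIntegral.integral_eq_sub_of_hasDerivAt_of_le
      (f := fun x => f₁ x - k * Real.log x) hR ?_ ?_ ?_
    · refine ((hf₁.continuousOn).mono Icc_subset_Ici_self).sub
        (continuousOn_const.mul ((Real.continuousOn_log).mono ?_))
      intro x hx
      exact ne_of_gt (lt_of_lt_of_le hr₀0 hx.1)
    · intro x hx
      have hx0 : x ≠ 0 := ne_of_gt (lt_trans hr₀0 hx.1)
      have h1 := (hdiffble x hx.1).1
      have h2 : HasDerivAt (fun y => k * Real.log y) (k * x⁻¹) x :=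
        (Real.hasDerivAt_log hx0).const_mul k
      have := h1.sub h2
      rw [show deriv f₁ x - k / x = deriv f₁ x - k * x⁻¹ by rw [div_eq_mul_inv]]
      exact this
    · exact (intervalIntegrable_iff_integrableOn_Ioc_of_le hR).2
        (hGint.mono_set Ioc_subset_Ioi_self)
  refine ⟨f₁ r₀ - k * Real.log r₀ + ∫ x in Ioi r₀, (deriv f₁ x - k / x), ?_⟩
  have ht := intervalIntegral_tendsto_integral_Ioi r₀ hGint tendsto_id
  have htt : Tendsto (fun R => f₁ R - k * Real.log R) atTop
      (nhds (f₁ r₀ - k * Real.log r₀ + ∫ x in Ioi r₀, (deriv f₁ x - k / x))) := by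
    refine (tendsto_const_nhds.add ht).congr' ?_
    filter_upwards [eventually_ge_atTop r₀] with R hR
    show (f₁ r₀ - k * Real.log r₀) + (∫ x in r₀..R, (deriv f₁ x - k / x)) = f₁ R - k * Real.log R
    rw [hFTC3 R hR]
    ring
  have := htt.sub_const (f₁ r₀ - k * Real.log r₀ + ∫ x in Ioi r₀, (deriv f₁ x - k / x))
  simpa using this
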